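/- Let G be a regular caterpillar with an odd number s = 2k+1 of spine vertices, each spine vertex having exactly Δ ≥ 1 legs, so n = (2k+1)(Δ+1). If c is a labeling of G whose differential value is at least ⌈(n − Δ)/2⌉ + 1, then no spine vertex v satisfies ⌈(n − Δ)/2⌉ ≤ c(v) ≤ ⌈(n + Δ)/2⌉. -/
import Mathlib


/-- A labeling of the vertices of a finite graph on `n` vertices: a one-to-one
assignment of the numbers `1, …, n` to the vertices. -/
def IsLabeling {V : Type*} [Fintype V] (c : V → ℕ) : Prop :=
  Function.Injective c ∧ ∀ v, c v ∈ Finset.Icc 1 (Fintype.card V)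

/-- The differential value of the labeling `c` is at least `d`: every edge has
label difference at least `d`. -/
def DiffValAtLeast {V : Type*} (G : SimpleGraph V) (c : V → ℕ) (d : ℕ) : Prop :=
  ∀ u v, G.Adj u v → d ≤ Nat.dist (c u) (c v)

/-- The differential chromatic number: the maximum, over all labelings, of the
minimum label difference over the edges. -/
noncomputable def diffChromNum {V : Type*} [Fintype V] (G : SimpleGraph V) : ℕ :=
  sSup {d : ℕ | ∃ c : V → ℕ, IsLabeling c ∧ DiffValAtLeast G c d}

/-- The regular caterpillar with spine vertices `(i, 0)` for `i : Fin s` forming a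
path, each spine vertex `(i, 0)` adjacent to its `Δ` legs `(i, j)`, `j ≠ 0`. -/
def regularCaterpillar (s Δ : ℕ) : SimpleGraph (Fin s × Fin (Δ + 1)) :=
  SimpleGraph.fromRel (fun a b =>
    (a.2 = 0 ∧ b.2 = 0 ∧ (a.1 : ℕ) + 1 = (b.1 : ℕ)) ∨
    (a.1 = b.1 ∧ a.2 = 0 ∧ b.2 ≠ 0))

/-- For a regular caterpillar with an odd number `s = 2k+1` of spine vertices and
`Δ ≥ 1` legs per spine vertex (`n = (2k+1)(Δ+1)`), any labeling whose differential
value is at least `⌈(n − Δ)/2⌉ + 1` assigns to no spine vertex a label in the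
interval `[⌈(n − Δ)/2⌉, ⌈(n + Δ)/2⌉]`. -/
theorem stmt_2 (k Δ : ℕ) (hΔ : 1 ≤ Δ)
    (c : Fin (2 * k + 1) × Fin (Δ + 1) → ℕ) (hc : IsLabeling c)
    (hd : DiffValAtLeast (regularCaterpillar (2 * k + 1) Δ) c
      (((2 * k + 1) * (Δ + 1) - Δ + 1) / 2 + 1)) :
    ∀ v : Fin (2 * k + 1) × Fin (Δ + 1), v.2 = 0 →
      ¬(((2 * k + 1) * (Δ + 1) - Δ + 1) / 2 ≤ c v ∧
        c v ≤ ((2 * k + 1) * (Δ + 1) + Δ + 1) / 2) := by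
  intro v hv2 ⟨h1, h2⟩
  set n := (2 * k + 1) * (Δ + 1) with hn
  have hncard : Fintype.card (Fin (2 * k + 1) × Fin (Δ + 1)) = n := by
    simp [Fintype.card_prod, hn]
  set d := (n - Δ + 1) / 2 + 1 with hdd
  -- every leg of v is adjacent to v
  have hadj : ∀ j : Fin (Δ + 1), j ≠ 0 →
      (regularCaterpillar (2 * k + 1) Δ).Adj v (v.1, j) := by
    intro j hj
    refine ⟨?_, Or.inl (Or.inr ⟨rfl, hv2, hj⟩)⟩
    intro h
    apply hj
    have := congrArg Prod.snd h
    simp at this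
    rw [← this, hv2]
  -- the target finset
  set S : Finset ℕ := (Finset.Icc 1 n).filter (fun x => d ≤ Nat.dist x (c v)) with hS
  have hmap : ∀ j ∈ Finset.univ.filter (fun j : Fin (Δ + 1) => j ≠ 0),
      c (v.1, j) ∈ S := by
    intro j hj
    simp only [Finset.mem_filter, Finset.mem_univ, true_and] at hj
    simp only [hS, Finset.mem_filter]
    constructor
    · have := hc.2 (v.1, j)
      rwa [hncard] at this
    · have := hd (v.1, j) v ((hadj j hj).symm)
      rwa [Nat.dist_comm] at this ⊢
  have hinj : Set.InjOn (fun j : Fin (Δ + 1) => c (v.1, j))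
      (Finset.univ.filter (fun j : Fin (Δ + 1) => j ≠ 0)) := by
    intro a _ b _ hab
    have := hc.1 hab
    exact (Prod.mk.injEq _ _ _ _ ▸ this).2
  have hcard := Finset.card_le_card_of_injOn _ hmap hinj
  have hΔcard : (Finset.univ.filter (fun j : Fin (Δ + 1) => j ≠ 0)).card = Δ := by
    rw [Finset.filter_ne' Finset.univ 0, Finset.card_erase_of_mem (Finset.mem_univ 0)]
    simp
  rw [hΔcard] at hcard
  -- bound the size of S
  have hsub : S ⊆ Finset.Icc 1 (c v - d) ∪ Finset.Icc (c v + d) n := by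
    intro x hx
    simp only [hS, Finset.mem_filter, Finset.mem_Icc] at hx
    obtain ⟨⟨hx1, hxn⟩, hxd⟩ := hx
    rcases le_or_gt x (c v) with h | h
    · rw [Nat.dist_eq_sub_of_le h] at hxd
      exact Finset.mem_union_left _ (Finset.mem_Icc.mpr ⟨hx1, by omega⟩)
    · rw [Nat.dist_eq_sub_of_le_right h.le] at hxd
      exact Finset.mem_union_right _ (Finset.mem_Icc.mpr ⟨by omega, hxn⟩)
  have hScard : S.card ≤ (c v - d) + (n + 1 - (c v + d)) := by
    calc S.card ≤ (Finset.Icc 1 (c v - d) ∪ Finset.Icc (c v + d) n).card :=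
          Finset.card_le_card hsub
      _ ≤ (Finset.Icc 1 (c v - d)).card + (Finset.Icc (c v + d) n).card :=
          Finset.card_union_le _ _
      _ = (c v - d) + (n + 1 - (c v + d)) := by rw [Nat.card_Icc, Nat.card_Icc]; omega
  have hlab : 1 ≤ c v ∧ c v ≤ n := by
    have := hc.2 v
    rw [hncard] at this
    exact Finset.mem_Icc.mp this
  have hnval : n = 2 * (k * (Δ + 1)) + Δ + 1 := by ring
  omega
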